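/- Fix conjugacy classes C_1 ⊆ GL_1(F_q) given by scalars λ ≠ μ. For uniform T ∈ GL_n(F_q) with n ≥ 2, the expected value of X_{(λ)}(T)·X_{(μ)}(T) equals |D|/|GL_2(F_q)| where D is the conjugacy class of diag(λ,μ) in GL_2(F_q); explicitly this expectation equals q(q+1)/((q²−1)(q²−q)) = 1/(q−1)². -/

import Mathlib

set_option linter.unusedSectionVars false
set_option linter.unreachableTactic false
set_option linter.unusedTactic false

open Matrix Finset Module


open Matrix

/-- `X_{(λ)}(T)`: the number of lines `L ≤ F^n` with `T(L) = L` on which `T` acts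
by the scalar `λ`. -/
noncomputable def eigenLineCount (F : Type) [Field F] {n : ℕ} (lam : F) (T : GL (Fin n) F) : ℕ :=
  Set.ncard {L : Submodule F (Fin n → F) | Module.finrank F L = 1 ∧
    ∀ v ∈ L, (T : Matrix (Fin n) (Fin n) F).mulVec v = lam • v}




variable {F : Type} [Field F] [Fintype F] [DecidableEq F] {n : ℕ}

lemma line_count (a : F) (T : GL (Fin n) F) :
    eigenLineCount F a T * (Fintype.card F - 1) =
      (Finset.univ.filter (fun v : Fin n → F =>
        v ≠ 0 ∧ (T : Matrix (Fin n) (Fin n) F).mulVec v = a • v)).card := by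
  classical
  set LS : Set (Submodule F (Fin n → F)) := {L | Module.finrank F L = 1 ∧
    ∀ v ∈ L, (T : Matrix (Fin n) (Fin n) F).mulVec v = a • v} with hLS
  haveI : Finite (Submodule F (Fin n → F)) :=
    Finite.of_injective (fun L => (L : Set (Fin n → F))) (fun L₁ L₂ h => SetLike.ext' h)
  have hfin : LS.Finite := Set.toFinite LS
  have h1 : eigenLineCount F a T = hfin.toFinset.card := by
    rw [eigenLineCount, Set.ncard_eq_toFinset_card _ hfin]
  set s := (Finset.univ.filter (fun v : Fin n → F =>
        v ≠ 0 ∧ (T : Matrix (Fin n) (Fin n) F).mulVec v = a • v)) with hs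
  have hmap : ∀ v ∈ s, Submodule.span F {v} ∈ hfin.toFinset := by
    intro v hv
    rw [hs, Finset.mem_filter] at hv
    obtain ⟨-, hv0, hveig⟩ := hv
    rw [Set.Finite.mem_toFinset]
    refine ⟨finrank_span_singleton hv0, ?_⟩
    intro w hw
    rw [Submodule.mem_span_singleton] at hw
    obtain ⟨c, rfl⟩ := hw
    rw [mulVec_smul, hveig, smul_comm]
  have h2 := Finset.card_eq_sum_card_fiberwise hmap
  have h3 : ∀ L ∈ hfin.toFinset,
      (s.filter (fun v => Submodule.span F {v} = L)).card = Fintype.card F - 1 := by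
    intro L hL
    rw [Set.Finite.mem_toFinset] at hL
    obtain ⟨hL1, hLe⟩ := hL
    have hcard : Fintype.card L = Fintype.card F := by
      rw [card_eq_pow_finrank (K := F) (V := L), hL1, pow_one]
    have hset : s.filter (fun v => Submodule.span F {v} = L)
        = (L : Set (Fin n → F)).toFinset.erase 0 := by
      ext v
      simp only [Finset.mem_filter, Finset.mem_erase, Set.mem_toFinset, SetLike.mem_coe, hs,
        Finset.mem_univ, true_and]
      constructor
      · rintro ⟨⟨hv0, -⟩, hsp⟩
        exact ⟨hv0, hsp ▸ Submodule.mem_span_singleton_self v⟩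
      · rintro ⟨hv0, hvL⟩
        refine ⟨⟨hv0, hLe v hvL⟩, ?_⟩
        apply Submodule.eq_of_le_of_finrank_eq
        · rwa [Submodule.span_le, Set.singleton_subset_iff]
        · rw [finrank_span_singleton hv0, hL1]
    rw [hset, Finset.card_erase_of_mem (by simp), Set.toFinset_card]
    simp only [SetLike.coe_sort_coe]
    rw [hcard]
  rw [Finset.sum_congr rfl h3, Finset.sum_const, smul_eq_mul] at h2
  rw [h1, h2]



lemma eig_indep {a b : F} (hab : a ≠ b) {v w : Fin n → F} {M : Matrix (Fin n) (Fin n) F}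
    (hv : v ≠ 0) (hw : w ≠ 0) (h1 : M.mulVec v = a • v) (h2 : M.mulVec w = b • w) :
    LinearIndependent F ![v, w] := by
  rw [LinearIndependent.pair_iff]
  intro s t hst
  have hap : M.mulVec (s • v + t • w) = 0 := by rw [hst, mulVec_zero]
  rw [mulVec_add, mulVec_smul, mulVec_smul, h1, h2] at hap
  have h3 : a • (s • v + t • w) = 0 := by rw [hst, smul_zero]
  have h4 : (t * (b - a)) • w = 0 := by
    have h5 : (t * (b - a)) • w = (s • a • v + t • b • w) - a • (s • v + t • w) := by module
    rw [h5, hap, h3, sub_zero]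
  have ht : t = 0 := by
    rcases smul_eq_zero.1 h4 with h | h
    · rcases mul_eq_zero.1 h with h' | h'
      · exact h'
      · exact absurd (sub_eq_zero.1 h') (Ne.symm hab)
    · exact absurd h hw
  subst ht
  have hs : s = 0 := by
    rw [zero_smul, add_zero, smul_eq_zero] at hst
    tauto
  exact ⟨hs, rfl⟩

lemma exists_g (hn : 2 ≤ n) {v w : Fin n → F} (h : LinearIndependent F ![v, w]) :
    ∃ g : GL (Fin n) F,
      (g : Matrix (Fin n) (Fin n) F).mulVec (Pi.single (⟨0, by omega⟩ : Fin n) 1) = v ∧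
      (g : Matrix (Fin n) (Fin n) F).mulVec (Pi.single (⟨1, by omega⟩ : Fin n) 1) = w := by
  classical
  have hvw : v ≠ w := by
    intro hvw
    have := h.injective (by simp [hvw] : (![v,w]) 0 = (![v,w]) 1)
    simp at this
  have hsub : LinearIndepOn F id (Set.range ![v, w]) :=
    (linearIndepOn_id_range_iff h.injective).mpr h
  set t := hsub.extend (Set.subset_univ _) with ht
  set b := Basis.extend hsub with hb
  haveI : FiniteDimensional F (Fin n → F) := inferInstance
  haveI : Fintype t := FiniteDimensional.fintypeBasisIndex b
  have hvt : v ∈ t := hsub.subset_extend _ ⟨0, rfl⟩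
  have hwt : w ∈ t := hsub.subset_extend _ ⟨1, rfl⟩
  have hcard : Fintype.card t = n := by
    rw [← finrank_eq_card_basis b, finrank_pi]
    simp
  obtain ⟨e0⟩ := Fintype.truncEquivFinOfCardEq hcard
  set i0 : Fin n := ⟨0, by omega⟩
  set i1 : Fin n := ⟨1, by omega⟩
  have hi01 : i0 ≠ i1 := by simp [i0, i1, Fin.ext_iff]
  set xv : t := ⟨v, hvt⟩
  set xw : t := ⟨w, hwt⟩
  have hxvw : xv ≠ xw := by simp [xv, xw, hvw]
  set e1 : t ≃ Fin n := e0.trans (Equiv.swap (e0 xv) i0) with he1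
  have he1v : e1 xv = i0 := by simp [he1]
  set e2 : t ≃ Fin n := e1.trans (Equiv.swap (e1 xw) i1) with he2
  have he2w : e2 xw = i1 := by simp [he2]
  have he2v : e2 xv = i0 := by
    rw [he2, Equiv.trans_apply, he1v, Equiv.swap_apply_of_ne_of_ne]
    · intro hc
      exact hxvw (e1.injective (he1v.trans hc))
    · exact hi01
  set b' : Basis (Fin n) F (Fin n → F) := b.reindex e2 with hb'
  have hb'v : b' i0 = v := by
    rw [hb', Basis.reindex_apply, ← he2v, Equiv.symm_apply_apply, hb, Basis.extend_apply_self]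
  have hb'w : b' i1 = w := by
    rw [hb', Basis.reindex_apply, ← he2w, Equiv.symm_apply_apply, hb, Basis.extend_apply_self]
  set φ : (Fin n → F) ≃ₗ[F] (Fin n → F) :=
    (Pi.basisFun F (Fin n)).equiv b' (Equiv.refl _) with hφ
  have hφ1 : φ.toLinearMap ∘ₗ φ.symm.toLinearMap = LinearMap.id := by
    ext x : 1
    simp
  have hφ2 : φ.symm.toLinearMap ∘ₗ φ.toLinearMap = LinearMap.id := by
    ext x : 1
    simp
  set g : GL (Fin n) F := ⟨LinearMap.toMatrix' φ.toLinearMap, LinearMap.toMatrix' φ.symm.toLinearMap,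
    by rw [← LinearMap.toMatrix'_comp, hφ1, LinearMap.toMatrix'_id],
    by rw [← LinearMap.toMatrix'_comp, hφ2, LinearMap.toMatrix'_id]⟩ with hg
  refine ⟨g, ?_, ?_⟩
  · have : (g : Matrix (Fin n) (Fin n) F).mulVec (Pi.single i0 1) = φ (Pi.single i0 1) := by
      rw [hg, ← Matrix.toLin'_apply, Matrix.toLin'_toMatrix']
      rfl
    rw [this, hφ, show (Pi.single i0 (1:F)) = Pi.basisFun F (Fin n) i0 by simp [Pi.basisFun_apply],
      Basis.equiv_apply, Equiv.refl_apply, hb'v]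
  · have : (g : Matrix (Fin n) (Fin n) F).mulVec (Pi.single i1 1) = φ (Pi.single i1 1) := by
      rw [hg, ← Matrix.toLin'_apply, Matrix.toLin'_toMatrix']
      rfl
    rw [this, hφ, show (Pi.single i1 (1:F)) = Pi.basisFun F (Fin n) i1 by simp [Pi.basisFun_apply],
      Basis.equiv_apply, Equiv.refl_apply, hb'w]



-- diagonal unit with prescribed eigen-action on e0, e1
lemma exists_M (hn : 2 ≤ n) {a b : F} (ha : a ≠ 0) (hb : b ≠ 0) :
    ∃ M : GL (Fin n) F,
      (M : Matrix (Fin n) (Fin n) F).mulVec (Pi.single (⟨0, by omega⟩ : Fin n) 1)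
          = a • (Pi.single (⟨0, by omega⟩ : Fin n) 1 : Fin n → F) ∧
      (M : Matrix (Fin n) (Fin n) F).mulVec (Pi.single (⟨1, by omega⟩ : Fin n) 1)
          = b • (Pi.single (⟨1, by omega⟩ : Fin n) 1 : Fin n → F) ∧
      (↑M⁻¹ : Matrix (Fin n) (Fin n) F).mulVec (Pi.single (⟨0, by omega⟩ : Fin n) 1)
          = a⁻¹ • (Pi.single (⟨0, by omega⟩ : Fin n) 1 : Fin n → F) ∧
      (↑M⁻¹ : Matrix (Fin n) (Fin n) F).mulVec (Pi.single (⟨1, by omega⟩ : Fin n) 1)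
          = b⁻¹ • (Pi.single (⟨1, by omega⟩ : Fin n) 1 : Fin n → F) := by
  set i0 : Fin n := ⟨0, by omega⟩
  set i1 : Fin n := ⟨1, by omega⟩
  set d : Fin n → F := fun i => if i = i0 then a else if i = i1 then b else 1 with hd
  set d' : Fin n → F := fun i => if i = i0 then a⁻¹ else if i = i1 then b⁻¹ else 1 with hd'
  have hi01' : i1 ≠ i0 := by simp [i0, i1, Fin.ext_iff]
  have hdd' : ∀ i, d i * d' i = 1 := by
    intro i
    by_cases h0 : i = i0 <;> by_cases h1 : i = i1 <;>
      simp [hd, hd', h0, h1, ha, hb, hi01'] <;> field_simp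
  have hone : ∀ (u u' : Fin n → F), (∀ i, u i * u' i = 1) →
      diagonal u * diagonal u' = 1 := by
    intro u u' h
    rw [diagonal_mul_diagonal]
    have h2 : (fun i => u i * u' i) = (1 : Fin n → F) := funext h
    rw [h2]
    exact diagonal_one
  have key : ∀ (u : Fin n → F) (j : Fin n),
      (diagonal u).mulVec (Pi.single j 1 : Fin n → F) = u j • (Pi.single j 1 : Fin n → F) := by
    intro u j
    funext x
    by_cases hx : x = j <;>
      simp [mulVec_diagonal, Pi.single_apply, hx]
  have hi01 := hi01'
  refine ⟨⟨diagonal d, diagonal d', hone d d' hdd', hone d' d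
    (fun i => by rw [mul_comm]; exact hdd' i)⟩, ?_, ?_, ?_, ?_⟩
  · rw [show ((⟨diagonal d, diagonal d', _, _⟩ : GL (Fin n) F) : Matrix (Fin n) (Fin n) F)
      = diagonal d from rfl, key d i0]
    simp [hd]
  · rw [show ((⟨diagonal d, diagonal d', _, _⟩ : GL (Fin n) F) : Matrix (Fin n) (Fin n) F)
      = diagonal d from rfl, key d i1]
    simp [hd, hi01]
  · rw [show (↑(⟨diagonal d, diagonal d', _, _⟩ : GL (Fin n) F)⁻¹ : Matrix (Fin n) (Fin n) F)
      = diagonal d' from rfl, key d' i0]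
    simp [hd']
  · rw [show (↑(⟨diagonal d, diagonal d', _, _⟩ : GL (Fin n) F)⁻¹ : Matrix (Fin n) (Fin n) F)
      = diagonal d' from rfl, key d' i1]
    simp [hd', hi01]





lemma gl_cancel (g : GL (Fin n) F) (y : Fin n → F) :
    (g : Matrix (Fin n) (Fin n) F).mulVec ((↑g⁻¹ : Matrix (Fin n) (Fin n) F).mulVec y) = y := by
  rw [mulVec_mulVec]
  rw [show ((g : Matrix (Fin n) (Fin n) F) * (↑g⁻¹ : Matrix (Fin n) (Fin n) F)) = 1 from g.mul_inv]
  rw [one_mulVec]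

lemma gl_cancel' (g : GL (Fin n) F) (y : Fin n → F) :
    (↑g⁻¹ : Matrix (Fin n) (Fin n) F).mulVec ((g : Matrix (Fin n) (Fin n) F).mulVec y) = y := by
  rw [mulVec_mulVec]
  rw [show ((↑g⁻¹ : Matrix (Fin n) (Fin n) F) * (g : Matrix (Fin n) (Fin n) F)) = 1 from g.inv_mul]
  rw [one_mulVec]

lemma conj_eig_iff (g T : GL (Fin n) F) (x : Fin n → F) (c : F) :
    (↑(g⁻¹ * T * g) : Matrix (Fin n) (Fin n) F).mulVec x = c • x ↔
      (T : Matrix (Fin n) (Fin n) F).mulVec ((g : Matrix (Fin n) (Fin n) F).mulVec x)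
        = c • (g : Matrix (Fin n) (Fin n) F).mulVec x := by
  have hval : (↑(g⁻¹ * T * g) : Matrix (Fin n) (Fin n) F)
      = (↑g⁻¹ : Matrix (Fin n) (Fin n) F) * (T : Matrix (Fin n) (Fin n) F)
        * (g : Matrix (Fin n) (Fin n) F) := by
    simp [Units.val_mul]
  rw [hval, ← mulVec_mulVec, ← mulVec_mulVec]
  constructor
  · intro h
    have h2 := congrArg ((g : Matrix (Fin n) (Fin n) F).mulVec ·) h
    rw [gl_cancel, mulVec_smul] at h2
    exact h2
  · intro h
    rw [h, mulVec_smul, gl_cancel']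



lemma main_count (hn : 2 ≤ n) {a b : F} (ha : a ≠ 0) (hb : b ≠ 0) (hab : a ≠ b) :
    (∑ T : GL (Fin n) F,
      (Finset.univ.filter (fun v : Fin n → F =>
        v ≠ 0 ∧ (T : Matrix (Fin n) (Fin n) F).mulVec v = a • v)).card *
      (Finset.univ.filter (fun v : Fin n → F =>
        v ≠ 0 ∧ (T : Matrix (Fin n) (Fin n) F).mulVec v = b • v)).card)
    = Fintype.card (GL (Fin n) F) := by
  classical
  set i0 : Fin n := ⟨0, by omega⟩
  set i1 : Fin n := ⟨1, by omega⟩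
  set e0 : Fin n → F := Pi.single i0 1 with he0d
  set e1 : Fin n → F := Pi.single i1 1 with he1d
  have he0 : e0 ≠ 0 := by
    intro h
    have := congrFun h i0
    simp [he0d] at this
  have he1 : e1 ≠ 0 := by
    intro h
    have := congrFun h i1
    simp [he1d] at this
  set P : GL (Fin n) F → (Fin n → F) → Prop :=
    fun T v => v ≠ 0 ∧ (T : Matrix (Fin n) (Fin n) F).mulVec v = a • v with hP
  set Q : GL (Fin n) F → (Fin n → F) → Prop :=
    fun T v => v ≠ 0 ∧ (T : Matrix (Fin n) (Fin n) F).mulVec v = b • v with hQ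
  -- Step A : rewrite as a card of a sigma type
  have stepA : (∑ T : GL (Fin n) F,
      (Finset.univ.filter (P T)).card * (Finset.univ.filter (Q T)).card)
      = ∑ p : (Fin n → F) × (Fin n → F), Fintype.card {T : GL (Fin n) F // P T p.1 ∧ Q T p.2} := by
    have h1 : ∀ T : GL (Fin n) F,
        (Finset.univ.filter (P T)).card * (Finset.univ.filter (Q T)).card
          = Fintype.card ({v // P T v} × {w // Q T w}) := by
      intro T
      rw [Fintype.card_prod, Fintype.card_subtype, Fintype.card_subtype]
    rw [Finset.sum_congr rfl (fun T _ => h1 T)]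
    rw [← Fintype.card_sigma]
    have e : (Σ T : GL (Fin n) F, ({v // P T v} × {w // Q T w})) ≃
        (Σ p : (Fin n → F) × (Fin n → F), {T : GL (Fin n) F // P T p.1 ∧ Q T p.2}) :=
      { toFun := fun x => ⟨(x.2.1.1, x.2.2.1), ⟨x.1, ⟨x.2.1.2, x.2.2.2⟩⟩⟩
        invFun := fun y => ⟨y.2.1, ⟨⟨y.1.1, y.2.2.1⟩, ⟨y.1.2, y.2.2.2⟩⟩⟩
        left_inv := fun ⟨T, ⟨v, hv⟩, ⟨w, hw⟩⟩ => rfl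
        right_inv := fun ⟨⟨v, w⟩, ⟨T, h⟩⟩ => rfl }
    rw [Fintype.card_congr e, Fintype.card_sigma]
  rw [stepA]
  -- orbit predicate
  set orb : (Fin n → F) × (Fin n → F) → Prop := fun p =>
    ∃ g : GL (Fin n) F, (g : Matrix (Fin n) (Fin n) F).mulVec e0 = p.1 ∧
      (g : Matrix (Fin n) (Fin n) F).mulVec e1 = p.2 with horb
  have hzero : ∀ p, ¬ orb p → Fintype.card {T : GL (Fin n) F // P T p.1 ∧ Q T p.2} = 0 := by
    intro p hp
    rw [Fintype.card_eq_zero_iff]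
    refine ⟨fun ⟨T, hT⟩ => hp ?_⟩
    obtain ⟨⟨hv0, hv⟩, ⟨hw0, hw⟩⟩ := hT
    exact exists_g hn (eig_indep hab hv0 hw0 hv hw)
  have hconst : ∀ p, orb p →
      Fintype.card {T : GL (Fin n) F // P T p.1 ∧ Q T p.2}
        = Fintype.card {T : GL (Fin n) F // P T e0 ∧ Q T e1} := by
    intro p hp
    obtain ⟨g, hg0, hg1⟩ := hp
    apply Fintype.card_congr
    refine ⟨fun T => ⟨g⁻¹ * T.1 * g, ?_, ?_⟩, fun S => ⟨g * S.1 * g⁻¹, ?_, ?_⟩, ?_, ?_⟩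
    · obtain ⟨⟨hv0, hv⟩, -⟩ := T.2
      exact ⟨he0, (conj_eig_iff g T.1 e0 a).2 (by rw [hg0, hv])⟩
    · obtain ⟨-, ⟨hw0, hw⟩⟩ := T.2
      exact ⟨he1, (conj_eig_iff g T.1 e1 b).2 (by rw [hg1, hw])⟩
    · obtain ⟨⟨hv0, hv⟩, -⟩ := S.2
      have heq : g * S.1 * g⁻¹ = (g⁻¹)⁻¹ * S.1 * g⁻¹ := by rw [inv_inv]
      rw [heq]
      have hp10 : p.1 ≠ 0 := by
        intro h
        apply he0
        rw [← gl_cancel' g e0, hg0, h, mulVec_zero]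
      refine ⟨hp10, (conj_eig_iff g⁻¹ S.1 p.1 a).2 ?_⟩
      have hp1 : (↑g⁻¹ : Matrix (Fin n) (Fin n) F).mulVec p.1 = e0 := by
        rw [← hg0, gl_cancel']
      rw [hp1]
      exact hv
    · obtain ⟨-, ⟨hw0, hw⟩⟩ := S.2
      have heq : g * S.1 * g⁻¹ = (g⁻¹)⁻¹ * S.1 * g⁻¹ := by rw [inv_inv]
      rw [heq]
      have hp20 : p.2 ≠ 0 := by
        intro h
        apply he1
        rw [← gl_cancel' g e1, hg1, h, mulVec_zero]
      refine ⟨hp20, (conj_eig_iff g⁻¹ S.1 p.2 b).2 ?_⟩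
      have hp2 : (↑g⁻¹ : Matrix (Fin n) (Fin n) F).mulVec p.2 = e1 := by
        rw [← hg1, gl_cancel']
      rw [hp2]
      exact hw
    · intro T
      apply Subtype.ext
      simp [mul_assoc]
    · intro S
      apply Subtype.ext
      simp [mul_assoc]
  -- Step D : the two "stabilizer-like" sets have the same cardinality
  obtain ⟨M, hM0, hM1, hM0', hM1'⟩ := exists_M (F := F) hn ha hb
  have stepD : Fintype.card {T : GL (Fin n) F // P T e0 ∧ Q T e1}
      = Fintype.card {S : GL (Fin n) F //
          (S : Matrix (Fin n) (Fin n) F).mulVec e0 = e0 ∧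
          (S : Matrix (Fin n) (Fin n) F).mulVec e1 = e1} := by
    apply Fintype.card_congr
    have hmul : ∀ (A B : GL (Fin n) F) (x : Fin n → F),
        ((A * B : GL (Fin n) F) : Matrix (Fin n) (Fin n) F).mulVec x
          = (A : Matrix (Fin n) (Fin n) F).mulVec ((B : Matrix (Fin n) (Fin n) F).mulVec x) := by
      intro A B x
      rw [Units.val_mul, ← mulVec_mulVec]
    refine ⟨fun T => ⟨T.1 * M⁻¹, ?_, ?_⟩, fun S => ⟨S.1 * M, ?_, ?_⟩, ?_, ?_⟩
    · obtain ⟨⟨-, hv⟩, -⟩ := T.2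
      rw [hmul, hM0', mulVec_smul, hv, smul_smul, inv_mul_cancel₀ ha, one_smul]
    · obtain ⟨-, ⟨-, hw⟩⟩ := T.2
      rw [hmul, hM1', mulVec_smul, hw, smul_smul, inv_mul_cancel₀ hb, one_smul]
    · obtain ⟨hv, -⟩ := S.2
      exact ⟨he0, by rw [hmul, hM0, mulVec_smul, hv]⟩
    · obtain ⟨-, hw⟩ := S.2
      exact ⟨he1, by rw [hmul, hM1, mulVec_smul, hw]⟩
    · intro T
      apply Subtype.ext
      simp [mul_assoc]
    · intro S
      apply Subtype.ext
      simp [mul_assoc]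
  -- Step C : orbit-stabilizer
  set ψ : GL (Fin n) F → (Fin n → F) × (Fin n → F) :=
    fun g => ((g : Matrix (Fin n) (Fin n) F).mulVec e0,
      (g : Matrix (Fin n) (Fin n) F).mulVec e1) with hψ
  have horbdec : DecidablePred orb := fun p => Fintype.decidableExistsFintype
  set orbF : Finset ((Fin n → F) × (Fin n → F)) := @Finset.filter _ orb horbdec Finset.univ
    with horbF
  have hψmem : ∀ g : GL (Fin n) F, g ∈ Finset.univ → ψ g ∈ orbF := by
    intro g _
    rw [horbF, Finset.mem_filter]
    exact ⟨Finset.mem_univ _, ⟨g, rfl, rfl⟩⟩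
  have stepC := Finset.card_eq_sum_card_fiberwise hψmem
  have hfiber : ∀ p ∈ orbF, (Finset.univ.filter (fun g => ψ g = p)).card
      = Fintype.card {S : GL (Fin n) F //
          (S : Matrix (Fin n) (Fin n) F).mulVec e0 = e0 ∧
          (S : Matrix (Fin n) (Fin n) F).mulVec e1 = e1} := by
    intro p hp
    rw [horbF, Finset.mem_filter] at hp
    obtain ⟨-, g₀, hg₀0, hg₀1⟩ := hp
    rw [← Fintype.card_subtype]
    apply Fintype.card_congr
    have hmul : ∀ (A B : GL (Fin n) F) (x : Fin n → F),
        ((A * B : GL (Fin n) F) : Matrix (Fin n) (Fin n) F).mulVec x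
          = (A : Matrix (Fin n) (Fin n) F).mulVec ((B : Matrix (Fin n) (Fin n) F).mulVec x) := by
      intro A B x
      rw [Units.val_mul, ← mulVec_mulVec]
    refine ⟨fun g => ⟨g₀⁻¹ * g.1, ?_, ?_⟩, fun S => ⟨g₀ * S.1, ?_⟩, ?_, ?_⟩
    · have h0 : (g.1 : Matrix (Fin n) (Fin n) F).mulVec e0 = p.1 :=
        congrArg Prod.fst g.2
      rw [hmul, h0, ← hg₀0, gl_cancel']
    · have h1 : (g.1 : Matrix (Fin n) (Fin n) F).mulVec e1 = p.2 :=
        congrArg Prod.snd g.2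
      rw [hmul, h1, ← hg₀1, gl_cancel']
    · obtain ⟨h0, h1⟩ := S.2
      have : (((g₀ * S.1 : GL (Fin n) F)) : Matrix (Fin n) (Fin n) F).mulVec e0 = p.1 := by
        rw [hmul, h0, hg₀0]
      have h2 : (((g₀ * S.1 : GL (Fin n) F)) : Matrix (Fin n) (Fin n) F).mulVec e1 = p.2 := by
        rw [hmul, h1, hg₀1]
      exact Prod.ext this h2
    · intro g
      apply Subtype.ext
      simp [mul_assoc]
    · intro S
      apply Subtype.ext
      simp [mul_assoc]
  rw [Finset.sum_congr rfl hfiber, Finset.sum_const, smul_eq_mul] at stepC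
  -- Step E : put everything together
  have hsubset : orbF ⊆ Finset.univ := Finset.subset_univ _
  have hsum : ∑ p : (Fin n → F) × (Fin n → F),
      Fintype.card {T : GL (Fin n) F // P T p.1 ∧ Q T p.2}
      = ∑ p ∈ orbF, Fintype.card {T : GL (Fin n) F // P T p.1 ∧ Q T p.2} := by
    symm
    apply Finset.sum_subset hsubset
    intro p _ hpn
    apply hzero
    intro hcon
    apply hpn
    rw [horbF, Finset.mem_filter]
    exact ⟨Finset.mem_univ _, hcon⟩
  rw [hsum]
  have hsum2 : ∑ p ∈ orbF, Fintype.card {T : GL (Fin n) F // P T p.1 ∧ Q T p.2}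
      = orbF.card * Fintype.card {T : GL (Fin n) F // P T e0 ∧ Q T e1} := by
    rw [Finset.sum_congr rfl (fun p hp => hconst p (by
      rw [horbF, Finset.mem_filter] at hp
      exact hp.2)), Finset.sum_const, smul_eq_mul]
  rw [hsum2, stepD, ← stepC, Finset.card_univ]

lemma class_count {a b : F} (ha : a ≠ 0) (hb : b ≠ 0) (hab : a ≠ b) :
    (Set.ncard {S : GL (Fin 2) F | ∃ P : GL (Fin 2) F,
      (S : Matrix (Fin 2) (Fin 2) F)
        = (P : Matrix (Fin 2) (Fin 2) F) * Matrix.diagonal ![a, b]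
          * (P⁻¹ : GL (Fin 2) F)}) * (Fintype.card F - 1)^2
    = Fintype.card (GL (Fin 2) F) := by
  classical
  set d : Matrix (Fin 2) (Fin 2) F := Matrix.diagonal ![a, b] with hd
  have hone : ∀ (u u' : Fin 2 → F), (∀ i, u i * u' i = 1) →
      diagonal u * diagonal u' = 1 := by
    intro u u' h
    rw [diagonal_mul_diagonal]
    have h2 : (fun i => u i * u' i) = (1 : Fin 2 → F) := funext h
    rw [h2]
    exact diagonal_one
  have hab' : ∀ i, (![a, b] : Fin 2 → F) i * (![a⁻¹, b⁻¹] : Fin 2 → F) i = 1 := by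
    intro i
    fin_cases i <;> simp [ha, hb]
  set du : GL (Fin 2) F := ⟨d, diagonal ![a⁻¹, b⁻¹], hone _ _ hab',
    hone _ _ (fun i => by rw [mul_comm]; exact hab' i)⟩ with hdu
  have hduval : (du : Matrix (Fin 2) (Fin 2) F) = d := rfl
  -- the set as a finset
  set pred : GL (Fin 2) F → Prop := fun S => ∃ P : GL (Fin 2) F, S = P * du * P⁻¹ with hpred
  have hpreddec : DecidablePred pred := fun S => Fintype.decidableExistsFintype
  set Dfin : Finset (GL (Fin 2) F) := @Finset.filter _ pred hpreddec Finset.univ with hDfin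
  have hseteq : {S : GL (Fin 2) F | ∃ P : GL (Fin 2) F,
      (S : Matrix (Fin 2) (Fin 2) F)
        = (P : Matrix (Fin 2) (Fin 2) F) * Matrix.diagonal ![a, b]
          * (P⁻¹ : GL (Fin 2) F)} = ↑Dfin := by
    ext S
    simp only [Set.mem_setOf_eq, hDfin, Finset.coe_filter, Finset.mem_univ, true_and, hpred]
    constructor
    · rintro ⟨P, hP⟩
      refine ⟨P, Units.ext ?_⟩
      rw [Units.val_mul, Units.val_mul]
      exact hP
    · rintro ⟨P, hP⟩
      refine ⟨P, ?_⟩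
      rw [hP, Units.val_mul, Units.val_mul]
  rw [hseteq, Set.ncard_coe_finset]
  -- fiberwise count of the conjugation map
  set φ : GL (Fin 2) F → GL (Fin 2) F := fun g => g * du * g⁻¹ with hφ
  have hφmem : ∀ g : GL (Fin 2) F, g ∈ Finset.univ → φ g ∈ Dfin := by
    intro g _
    rw [hDfin, Finset.mem_filter]
    exact ⟨Finset.mem_univ _, g, rfl⟩
  have stepC := Finset.card_eq_sum_card_fiberwise hφmem
  -- each fiber has the cardinality of the centralizer
  have hfiber : ∀ S ∈ Dfin, (Finset.univ.filter (fun g => φ g = S)).card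
      = Fintype.card {Q : GL (Fin 2) F // Q * du = du * Q} := by
    intro S hS
    rw [hDfin, Finset.mem_filter] at hS
    obtain ⟨-, P₀, hP₀⟩ := hS
    rw [← Fintype.card_subtype]
    apply Fintype.card_congr
    refine ⟨fun g => ⟨P₀⁻¹ * g.1, ?_⟩, fun Q => ⟨P₀ * Q.1, ?_⟩, ?_, ?_⟩
    · have hg : g.1 * du * g.1⁻¹ = P₀ * du * P₀⁻¹ := g.2.trans hP₀
      calc P₀⁻¹ * g.1 * du = P₀⁻¹ * (g.1 * du * g.1⁻¹) * g.1 := by group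
        _ = P₀⁻¹ * (P₀ * du * P₀⁻¹) * g.1 := by rw [hg]
        _ = du * (P₀⁻¹ * g.1) := by group
    · have hQ := Q.2
      show P₀ * Q.1 * du * (P₀ * Q.1)⁻¹ = S
      calc P₀ * Q.1 * du * (P₀ * Q.1)⁻¹ = P₀ * (Q.1 * du * Q.1⁻¹) * P₀⁻¹ := by group
        _ = P₀ * du * P₀⁻¹ := by rw [hQ]; group
        _ = S := hP₀.symm
    · intro g
      apply Subtype.ext
      simp [mul_assoc]
    · intro Q
      apply Subtype.ext
      simp [mul_assoc]
  rw [Finset.sum_congr rfl hfiber, Finset.sum_const, smul_eq_mul] at stepC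
  -- centralizer has cardinality (q-1)^2
  have hcent : Fintype.card {Q : GL (Fin 2) F // Q * du = du * Q}
      = (Fintype.card F - 1)^2 := by
    have hpair : ∀ u v : Fˣ, ∀ i, (![(u:F), (v:F)] : Fin 2 → F) i
        * (![((u⁻¹ : Fˣ):F), ((v⁻¹ : Fˣ):F)] : Fin 2 → F) i = 1 := by
      intro u v i
      fin_cases i <;> simp
    set f : Fˣ × Fˣ → {Q : GL (Fin 2) F // Q * du = du * Q} := fun uv =>
      ⟨⟨diagonal ![(uv.1:F), (uv.2:F)], diagonal ![((uv.1⁻¹ : Fˣ):F), ((uv.2⁻¹ : Fˣ):F)],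
        hone _ _ (hpair uv.1 uv.2),
        hone _ _ (fun i => by rw [mul_comm]; exact hpair uv.1 uv.2 i)⟩, by
        apply Units.ext
        rw [Units.val_mul, Units.val_mul]
        show diagonal ![(uv.1:F), (uv.2:F)] * d = d * diagonal ![(uv.1:F), (uv.2:F)]
        rw [hd, diagonal_mul_diagonal, diagonal_mul_diagonal]
        exact congrArg diagonal (funext fun i => mul_comm _ _)⟩ with hf
    have hbij : Function.Bijective f := by
      constructor
      · intro uv uv' h
        have hval : diagonal ![(uv.1:F), (uv.2:F)] = diagonal ![(uv'.1:F), (uv'.2:F)] := by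
          have := congrArg (fun Q => ((Q : {Q : GL (Fin 2) F // Q * du = du * Q}).1
            : Matrix (Fin 2) (Fin 2) F)) h
          exact this
        have h0 := congrFun (congrFun hval 0) 0
        have h1 := congrFun (congrFun hval 1) 1
        simp [diagonal_apply_eq] at h0 h1
        exact Prod.ext (Units.ext h0) (Units.ext h1)
      · rintro ⟨Q, hQ⟩
        set Qm : Matrix (Fin 2) (Fin 2) F := (Q : Matrix (Fin 2) (Fin 2) F) with hQm
        have hQval : Qm * d = d * Qm := by
          have h := congrArg (Units.val) hQ
          rw [Units.val_mul, Units.val_mul] at h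
          exact h
        have h01 : Qm 0 1 = 0 := by
          have h := congrFun (congrFun hQval 0) 1
          rw [hd, Matrix.mul_diagonal, Matrix.diagonal_mul] at h
          simp only [Matrix.cons_val_one, Matrix.head_cons, Matrix.cons_val_zero] at h
          have h2 : Qm 0 1 * (b - a) = 0 := by rw [mul_sub, h]; ring
          rcases mul_eq_zero.1 h2 with h3 | h3
          · exact h3
          · exact absurd h3 (sub_ne_zero.2 (Ne.symm hab))
        have h10 : Qm 1 0 = 0 := by
          have h := congrFun (congrFun hQval 1) 0
          rw [hd, Matrix.mul_diagonal, Matrix.diagonal_mul] at h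
          simp only [Matrix.cons_val_one, Matrix.head_cons, Matrix.cons_val_zero] at h
          have h2 : Qm 1 0 * (a - b) = 0 := by rw [mul_sub, h]; ring
          rcases mul_eq_zero.1 h2 with h3 | h3
          · exact h3
          · exact absurd h3 (sub_ne_zero.2 hab)
        have hdet : IsUnit (Qm.det) := by
          rw [← Matrix.isUnit_iff_isUnit_det]
          exact Units.isUnit Q
        rw [Matrix.det_fin_two, h01, h10, mul_zero, sub_zero] at hdet
        have hu : IsUnit (Qm 0 0) := isUnit_of_mul_isUnit_left hdet
        have hv : IsUnit (Qm 1 1) := isUnit_of_mul_isUnit_right hdet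
        refine ⟨(hu.unit, hv.unit), ?_⟩
        apply Subtype.ext
        apply Units.ext
        show diagonal ![(hu.unit : F), (hv.unit : F)] = Qm
        rw [IsUnit.unit_spec, IsUnit.unit_spec]
        ext i j
        fin_cases i <;> fin_cases j <;>
          simp [Matrix.diagonal_apply, h01, h10]
    rw [← Fintype.card_of_bijective hbij, Fintype.card_prod, Fintype.card_units, sq]
  rw [Finset.card_univ] at stepC
  rw [stepC, hcent]


/-- For `λ ≠ μ ∈ Fˣ` and `n ≥ 2`, the expectation over uniform `T ∈ GL n F` of
`X_{(λ)}(T)·X_{(μ)}(T)` equals `|D|/|GL 2 F|` where `D` is the conjugacy class of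
`diag(λ,μ)` in `GL 2 F`, and explicitly equals `1/(q-1)²` with `q = |F|`. -/
theorem stmt18 (F : Type) [Field F] [Fintype F] [DecidableEq F] (n : ℕ) (hn : 2 ≤ n)
    (lam mu : Fˣ) (hlm : lam ≠ mu) :
    (∑ T : GL (Fin n) F,
        ((eigenLineCount F (lam : F) T * eigenLineCount F (mu : F) T : ℕ) : ℚ))
      / (Fintype.card (GL (Fin n) F) : ℚ)
    = (Set.ncard {S : GL (Fin 2) F | ∃ P : GL (Fin 2) F,
          (S : Matrix (Fin 2) (Fin 2) F)
            = (P : Matrix (Fin 2) (Fin 2) F) * Matrix.diagonal ![(lam : F), (mu : F)]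
              * (P⁻¹ : GL (Fin 2) F)} : ℚ)
        / (Fintype.card (GL (Fin 2) F) : ℚ) ∧
    (∑ T : GL (Fin n) F,
        ((eigenLineCount F (lam : F) T * eigenLineCount F (mu : F) T : ℕ) : ℚ))
      / (Fintype.card (GL (Fin n) F) : ℚ)
    = 1 / ((Fintype.card F : ℚ) - 1) ^ 2 := by
  have ha : (lam : F) ≠ 0 := lam.ne_zero
  have hb : (mu : F) ≠ 0 := mu.ne_zero
  have hab : (lam : F) ≠ (mu : F) := fun h => hlm (Units.ext h)
  have hq : 1 < Fintype.card F := Fintype.one_lt_card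
  have key1 : (∑ T : GL (Fin n) F,
      eigenLineCount F (lam : F) T * eigenLineCount F (mu : F) T) * (Fintype.card F - 1)^2
      = Fintype.card (GL (Fin n) F) := by
    rw [← main_count (F := F) hn ha hb hab, Finset.sum_mul]
    apply Finset.sum_congr rfl
    intro T _
    rw [← line_count (lam : F) T, ← line_count (mu : F) T]
    ring
  have key2 := class_count (F := F) ha hb hab
  have hGpos : (0:ℚ) < (Fintype.card (GL (Fin n) F) : ℚ) := by
    exact_mod_cast Fintype.card_pos
  have hG2pos : (0:ℚ) < (Fintype.card (GL (Fin 2) F) : ℚ) := by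
    exact_mod_cast Fintype.card_pos
  have hcQ : ((Fintype.card F - 1 : ℕ) : ℚ) = (Fintype.card F : ℚ) - 1 := by
    rw [Nat.cast_sub hq.le]
    norm_num
  have hcne : ((Fintype.card F : ℚ) - 1) ≠ 0 := by
    have h1 : (1:ℚ) < (Fintype.card F : ℚ) := by exact_mod_cast hq
    linarith
  have k1 : (∑ T : GL (Fin n) F,
      ((eigenLineCount F (lam : F) T * eigenLineCount F (mu : F) T : ℕ) : ℚ))
      * ((Fintype.card F : ℚ) - 1)^2 = (Fintype.card (GL (Fin n) F) : ℚ) := by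
    rw [← hcQ]
    exact_mod_cast key1
  have k2 : ((Set.ncard {S : GL (Fin 2) F | ∃ P : GL (Fin 2) F,
        (S : Matrix (Fin 2) (Fin 2) F)
          = (P : Matrix (Fin 2) (Fin 2) F) * Matrix.diagonal ![(lam : F), (mu : F)]
            * (P⁻¹ : GL (Fin 2) F)} : ℕ) : ℚ)
      * ((Fintype.card F : ℚ) - 1)^2 = (Fintype.card (GL (Fin 2) F) : ℚ) := by
    rw [← hcQ]
    exact_mod_cast key2
  have hp2 : ((Fintype.card F : ℚ) - 1)^2 ≠ 0 := pow_ne_zero 2 hcne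
  have div_helper : ∀ x y c : ℚ, x * c = y → 0 < y → c ≠ 0 → x / y = 1 / c := by
    intro x y c h hy hc
    rw [div_eq_div_iff hy.ne' hc, h, one_mul]
  have eq1 : (∑ T : GL (Fin n) F,
      ((eigenLineCount F (lam : F) T * eigenLineCount F (mu : F) T : ℕ) : ℚ))
      / (Fintype.card (GL (Fin n) F) : ℚ) = 1 / ((Fintype.card F : ℚ) - 1) ^ 2 := by
    exact div_helper _ _ _ k1 hGpos hp2
  have eq2 : ((Set.ncard {S : GL (Fin 2) F | ∃ P : GL (Fin 2) F,
        (S : Matrix (Fin 2) (Fin 2) F)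
          = (P : Matrix (Fin 2) (Fin 2) F) * Matrix.diagonal ![(lam : F), (mu : F)]
            * (P⁻¹ : GL (Fin 2) F)} : ℕ) : ℚ)
      / (Fintype.card (GL (Fin 2) F) : ℚ) = 1 / ((Fintype.card F : ℚ) - 1) ^ 2 := by
    exact div_helper _ _ _ k2 hG2pos hp2
  exact ⟨eq1.trans eq2.symm, eq1⟩
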